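/- arXiv:2209.03447 — 6 statements merged into one kernel-verified Lean document; each statement's English description precedes it below -/
import Mathlib

section
/- Let k ≥ 2 be an integer and let Φ : ℝ^{k−1} → ℝ be defined by Φ(x) = log(1 + Σ_{s=1}^{k−1} exp(x_s)). Then for all u, v ∈ ℝ^{k−1}, the function g : ℝ → ℝ given by g(t) = Φ(u + t v) satisfies |g'''(t)| ≤ 5 ‖v‖₂ · g''(t) for every t ∈ ℝ, where g'' and g''' denote the second and third derivatives of g and ‖·‖₂ is the Euclidean norm. -/
/-- The multinomial log-partition function `Φ(x) = log(1 + Σ_s exp(x_s))`. -/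
noncomputable def Phi {m : ℕ} (x : EuclideanSpace ℝ (Fin m)) : ℝ :=
  Real.log (1 + ∑ s, Real.exp (x s))

section aux

open Finset Real

lemma key_ineq {ι : Type*} [Fintype ι] [Nonempty ι] (q a : ι → ℝ) (M : ℝ)
    (hq : ∀ i, 0 < q i) (ha : ∀ i, |a i| ≤ M) :
    |((∑ i, q i * a i ^ 3) * (∑ i, q i) ^ 2
        - 3 * (∑ i, q i * a i) * (∑ i, q i * a i ^ 2) * (∑ i, q i)
        + 2 * (∑ i, q i * a i) ^ 3) / (∑ i, q i) ^ 3|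
      ≤ 5 * M * (((∑ i, q i * a i ^ 2) * (∑ i, q i) - (∑ i, q i * a i) ^ 2)
          / (∑ i, q i) ^ 2) := by
  set S := ∑ i, q i with hSdef
  set A1 := ∑ i, q i * a i with hA1
  set A2 := ∑ i, q i * a i ^ 2 with hA2
  set A3 := ∑ i, q i * a i ^ 3 with hA3
  have hS : 0 < S := Finset.sum_pos (fun i _ => hq i) Finset.univ_nonempty
  have hM : 0 ≤ M := le_trans (abs_nonneg _) (ha (Classical.arbitrary ι))
  set μ := A1 / S with hμdef
  set c : ι → ℝ := fun i => a i - μ with hc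
  have hA1le : |A1| ≤ M * S := by
    calc |A1| ≤ ∑ i, |q i * a i| := Finset.abs_sum_le_sum_abs _ _
    _ ≤ ∑ i, q i * M := by
        apply Finset.sum_le_sum
        intro i _
        rw [abs_mul, abs_of_pos (hq i)]
        exact mul_le_mul_of_nonneg_left (ha i) (hq i).le
    _ = M * S := by rw [← Finset.sum_mul, mul_comm]
  have hμle : |μ| ≤ M := by
    rw [hμdef, abs_div, abs_of_pos hS, div_le_iff₀ hS]
    exact hA1le
  have hcle : ∀ i, |c i| ≤ 2 * M := by
    intro i
    calc |c i| ≤ |a i| + |μ| := abs_sub _ _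
    _ ≤ M + M := add_le_add (ha i) hμle
    _ = 2 * M := by ring
  have key2 : ∑ i, q i * c i ^ 3
      = (A3 * S ^ 2 - 3 * A1 * A2 * S + 2 * A1 ^ 3) / S ^ 2 := by
    have h1 : ∑ i, q i * c i ^ 3
        = A3 - 3 * μ * A2 + 3 * μ ^ 2 * A1 - μ ^ 3 * S := by
      rw [hA3, hA2, hA1, hSdef, Finset.mul_sum, Finset.mul_sum, Finset.mul_sum,
        ← Finset.sum_sub_distrib, ← Finset.sum_add_distrib, ← Finset.sum_sub_distrib]
      apply Finset.sum_congr rfl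
      intro i _
      simp only [hc]
      ring
    rw [h1, hμdef]
    field_simp
    ring
  have key1 : ∑ i, q i * c i ^ 2 = (A2 * S - A1 ^ 2) / S := by
    have h1 : ∑ i, q i * c i ^ 2 = A2 - 2 * μ * A1 + μ ^ 2 * S := by
      rw [hA2, hA1, hSdef, Finset.mul_sum, Finset.mul_sum,
        ← Finset.sum_sub_distrib, ← Finset.sum_add_distrib]
      apply Finset.sum_congr rfl
      intro i _
      simp only [hc]
      ring
    rw [h1, hμdef]
    field_simp
    ring
  have hqc2 : 0 ≤ ∑ i, q i * c i ^ 2 :=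
    Finset.sum_nonneg fun i _ => mul_nonneg (hq i).le (sq_nonneg _)
  have hbound : |∑ i, q i * c i ^ 3| ≤ 2 * M * ∑ i, q i * c i ^ 2 := by
    calc |∑ i, q i * c i ^ 3| ≤ ∑ i, |q i * c i ^ 3| := Finset.abs_sum_le_sum_abs _ _
    _ ≤ ∑ i, 2 * M * (q i * c i ^ 2) := by
        apply Finset.sum_le_sum
        intro i _
        have h : |q i * c i ^ 3| = q i * c i ^ 2 * |c i| := by
          rw [abs_mul, abs_of_pos (hq i)]
          have : |c i ^ 3| = c i ^ 2 * |c i| := by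
            rw [pow_succ, abs_mul, abs_pow, sq_abs]
          rw [this, mul_assoc]
        rw [h]
        calc q i * c i ^ 2 * |c i| ≤ q i * c i ^ 2 * (2 * M) :=
              mul_le_mul_of_nonneg_left (hcle i) (mul_nonneg (hq i).le (sq_nonneg _))
        _ = 2 * M * (q i * c i ^ 2) := by ring
    _ = 2 * M * ∑ i, q i * c i ^ 2 := by rw [← Finset.mul_sum]
  have hfrac : (A3 * S ^ 2 - 3 * A1 * A2 * S + 2 * A1 ^ 3) / S ^ 3
      = (∑ i, q i * c i ^ 3) / S := by
    rw [key2, div_div]; ring_nf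
  have hfrac2 : (A2 * S - A1 ^ 2) / S ^ 2 = (∑ i, q i * c i ^ 2) / S := by
    rw [key1, div_div]; ring_nf
  rw [hfrac, hfrac2, abs_div, abs_of_pos hS, div_le_iff₀ hS]
  calc |∑ i, q i * c i ^ 3| ≤ 2 * M * ∑ i, q i * c i ^ 2 := hbound
  _ ≤ 5 * M * ∑ i, q i * c i ^ 2 := by nlinarith
  _ = 5 * M * ((∑ i, q i * c i ^ 2) / S) * S := by field_simp

variable {n : ℕ} (u v : Fin n → ℝ)

noncomputable def Ej (j : ℕ) (t : ℝ) : ℝ := ∑ s, (v s) ^ j * Real.exp (u s + t * v s)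

noncomputable def Zf (t : ℝ) : ℝ := 1 + Ej u v 0 t

lemma hasDerivAt_Ej (j : ℕ) (t : ℝ) :
    HasDerivAt (Ej u v j) (Ej u v (j + 1) t) t := by
  unfold Ej
  apply HasDerivAt.fun_sum
  intro s _
  have h1 : HasDerivAt (fun t : ℝ => u s + t * v s) (v s) t := by
    simpa using ((hasDerivAt_id t).mul_const (v s)).const_add (u s)
  have h2 := (h1.exp).const_mul ((v s) ^ j)
  exact h2.congr_deriv (by ring)

lemma Zf_pos (t : ℝ) : 0 < Zf u v t := by
  have : 0 ≤ Ej u v 0 t :=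
    Finset.sum_nonneg fun s _ => by positivity
  unfold Zf; linarith

lemma hasDerivAt_Zf (t : ℝ) : HasDerivAt (Zf u v) (Ej u v 1 t) t := by
  unfold Zf
  simpa using (hasDerivAt_Ej u v 0 t).const_add 1

lemma deriv1 (t : ℝ) :
    HasDerivAt (fun t => Real.log (Zf u v t)) (Ej u v 1 t / Zf u v t) t :=
  (hasDerivAt_Zf u v t).log (Zf_pos u v t).ne'

lemma deriv2 (t : ℝ) :
    HasDerivAt (fun t => Ej u v 1 t / Zf u v t)
      ((Ej u v 2 t * Zf u v t - Ej u v 1 t * Ej u v 1 t) / (Zf u v t) ^ 2) t :=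
  (hasDerivAt_Ej u v 1 t).div (hasDerivAt_Zf u v t) (Zf_pos u v t).ne'

lemma deriv3 (t : ℝ) :
    HasDerivAt (fun t => (Ej u v 2 t * Zf u v t - Ej u v 1 t * Ej u v 1 t) / (Zf u v t) ^ 2)
      ((Ej u v 3 t * (Zf u v t) ^ 2 - 3 * Ej u v 1 t * Ej u v 2 t * Zf u v t
          + 2 * (Ej u v 1 t) ^ 3) / (Zf u v t) ^ 3) t := by
  have hN : HasDerivAt (fun t => Ej u v 2 t * Zf u v t - Ej u v 1 t * Ej u v 1 t)
      (Ej u v 3 t * Zf u v t + Ej u v 2 t * Ej u v 1 t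
        - (Ej u v 2 t * Ej u v 1 t + Ej u v 1 t * Ej u v 2 t)) t :=
    ((hasDerivAt_Ej u v 2 t).mul (hasDerivAt_Zf u v t)).sub
      ((hasDerivAt_Ej u v 1 t).mul (hasDerivAt_Ej u v 1 t))
  have hD : HasDerivAt (fun t => (Zf u v t) ^ 2) (2 * Zf u v t * Ej u v 1 t) t := by
    have := (hasDerivAt_Zf u v t).fun_pow 2
    simpa using this
  have hZ := Zf_pos u v t
  have hD0 : (Zf u v t) ^ 2 ≠ 0 := by positivity
  have := hN.fun_div hD hD0
  refine this.congr_deriv ?_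
  rw [div_eq_div_iff (by positivity) (by positivity)]
  ring

end aux

/-- Proposition 1: modified self-concordance of `Φ` with constant `R = 5`. -/
theorem stmt_0 (k : ℕ) (hk : 2 ≤ k)
    (u v : EuclideanSpace ℝ (Fin (k - 1)))
    (g : ℝ → ℝ) (hg : ∀ t : ℝ, g t = Phi (u + t • v)) :
    ∀ t : ℝ, |iteratedDeriv 3 g t| ≤ 5 * ‖v‖ * iteratedDeriv 2 g t := by
  intro t
  set u' : Fin (k - 1) → ℝ := fun s => u s with hu'
  set v' : Fin (k - 1) → ℝ := fun s => v s with hv'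
  have hgfun : g = fun t => Real.log (Zf u' v' t) := by
    funext t
    rw [hg, Phi]
    congr 1
    unfold Zf Ej
    simp [PiLp.add_apply, PiLp.smul_apply, smul_eq_mul, hu', hv']
  have h1 : deriv g = fun t => Ej u' v' 1 t / Zf u' v' t := by
    funext t
    rw [hgfun]
    exact (deriv1 u' v' t).deriv
  have h2 : deriv (fun t => Ej u' v' 1 t / Zf u' v' t)
      = fun t => (Ej u' v' 2 t * Zf u' v' t - Ej u' v' 1 t * Ej u' v' 1 t) / (Zf u' v' t) ^ 2 :=
    funext fun t => (deriv2 u' v' t).deriv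
  have h3 : deriv (fun t => (Ej u' v' 2 t * Zf u' v' t - Ej u' v' 1 t * Ej u' v' 1 t) / (Zf u' v' t) ^ 2)
      = fun t => (Ej u' v' 3 t * (Zf u' v' t) ^ 2 - 3 * Ej u' v' 1 t * Ej u' v' 2 t * Zf u' v' t
          + 2 * (Ej u' v' 1 t) ^ 3) / (Zf u' v' t) ^ 3 :=
    funext fun t => (deriv3 u' v' t).deriv
  have i2 : iteratedDeriv 2 g
      = fun t => (Ej u' v' 2 t * Zf u' v' t - Ej u' v' 1 t * Ej u' v' 1 t) / (Zf u' v' t) ^ 2 := by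
    rw [show (2 : ℕ) = 1 + 1 from rfl, iteratedDeriv_succ, iteratedDeriv_one, h1, h2]
  have i3 : iteratedDeriv 3 g
      = fun t => (Ej u' v' 3 t * (Zf u' v' t) ^ 2 - 3 * Ej u' v' 1 t * Ej u' v' 2 t * Zf u' v' t
          + 2 * (Ej u' v' 1 t) ^ 3) / (Zf u' v' t) ^ 3 := by
    rw [show (3 : ℕ) = 2 + 1 from rfl, iteratedDeriv_succ, i2, h3]
  simp only [i2, i3]
  -- coordinate bound
  have hcoord : ∀ s, |v' s| ≤ ‖v‖ := by
    intro s
    rw [EuclideanSpace.norm_eq]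
    calc |v' s| = Real.sqrt ((v s) ^ 2) := (Real.sqrt_sq_eq_abs _).symm
    _ ≤ Real.sqrt (∑ i, ‖v i‖ ^ 2) := by
        apply Real.sqrt_le_sqrt
        simpa [Real.norm_eq_abs, sq_abs] using
          Finset.single_le_sum (f := fun i => ‖v i‖ ^ 2)
            (fun i _ => sq_nonneg ‖v i‖) (Finset.mem_univ s)
  -- set up the weighted-moment instance
  set q : Option (Fin (k - 1)) → ℝ :=
    fun o => o.elim 1 (fun s => Real.exp (u' s + t * v' s)) with hq
  set a : Option (Fin (k - 1)) → ℝ := fun o => o.elim 0 v' with ha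
  have hqpos : ∀ o, 0 < q o := by
    rintro (_ | s) <;> simp [hq] <;> positivity
  have hab : ∀ o, |a o| ≤ ‖v‖ := by
    rintro (_ | s)
    · simp [ha]
    · simpa [ha] using hcoord s
  have hsum : ∀ j : ℕ, 1 ≤ j → (∑ o, q o * a o ^ j) = Ej u' v' j t := by
    intro j hj
    rw [Fintype.sum_option]
    have h0 : (0 : ℝ) ^ j = 0 := zero_pow (by omega)
    simp only [hq, ha, Option.elim, h0, mul_zero, one_mul, zero_add]
    unfold Ej
    exact Finset.sum_congr rfl fun s _ => mul_comm _ _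
  have hsum1 : (∑ o, q o * a o) = Ej u' v' 1 t := by
    have := hsum 1 le_rfl
    simpa using this
  have hsumq : (∑ o, q o) = Zf u' v' t := by
    rw [Fintype.sum_option]
    simp only [hq, Option.elim]
    unfold Zf Ej
    simp
  have key := key_ineq q a ‖v‖ hqpos hab
  rw [hsum1, hsum 2 (by norm_num), hsum 3 (by norm_num), hsumq] at key
  have e1 : Ej u' v' 2 t * Zf u' v' t - Ej u' v' 1 t * Ej u' v' 1 t
      = Ej u' v' 2 t * Zf u' v' t - (Ej u' v' 1 t) ^ 2 := by ring
  rw [e1]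
  exact key
end

section
/- Let k ≥ 2 be an integer, u, v ∈ ℝ^{k−1}, and let g(t) = Φ(u + t v) where Φ(x) = log(1 + Σ_{s=1}^{k−1} exp(x_s)). Setting r_s(t) = exp(u_s + t v_s) for s ∈ {1,…,k−1}, the third derivative of g satisfies, for all t ∈ ℝ, g'''(t) = [ Σ_{1 ≤ i < j ≤ k−1} r_i(t) r_j(t) (v_i − v_j)² · ( Σ_{l=1}^{k−1} (v_i + v_j − 2 v_l) r_l(t) ) + Σ_{i=1}^{k−1} v_i² r_i(t) · ( v_i (1 + 2 Σ_{j=1}^{k−1} r_j(t)) − 3 Σ_{j=1}^{k−1} v_j r_j(t) ) ] / (1 + Σ_{s=1}^{k−1} r_s(t))³. -/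
open Finset


/-- Pure algebraic identity for the numerator. -/
private lemma alg_aux {n : ℕ} (v w : Fin n → ℝ) :
    ((∑ i, ∑ j ∈ Finset.univ.filter (fun j => i < j),
        w i * w j * (v i - v j) ^ 2 * (∑ l, (v i + v j - 2 * v l) * w l))
      + ∑ i, (v i) ^ 2 * w i *
          (v i * (1 + 2 * ∑ j, w j) - 3 * ∑ j, v j * w j))
    = (∑ s, (v s) ^ 3 * w s) * (1 + ∑ s, w s) ^ 2
      - 3 * (∑ s, v s * w s) * (∑ s, (v s) ^ 2 * w s) * (1 + ∑ s, w s)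
      + 2 * (∑ s, v s * w s) ^ 3 := by
  set A := ∑ s, w s with hA
  set B := ∑ s, v s * w s with hB
  set C := ∑ s, (v s) ^ 2 * w s with hC
  set D := ∑ s, (v s) ^ 3 * w s with hD
  have hb : ∀ i j : Fin n, (∑ l, (v i + v j - 2 * v l) * w l) = (v i + v j) * A - 2 * B := by
    intro i j
    have h : ∀ l ∈ (univ : Finset (Fin n)), (v i + v j - 2 * v l) * w l
        = (v i + v j) * w l - 2 * (v l * w l) := fun l _ => by ring
    rw [Finset.sum_congr rfl h, Finset.sum_sub_distrib, ← Finset.mul_sum, ← Finset.mul_sum,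
      ← hA, ← hB]
  have h2 : (∑ i, (v i) ^ 2 * w i * (v i * (1 + 2 * A) - 3 * B))
      = D * (1 + 2 * A) - 3 * B * C := by
    have h : ∀ i ∈ (univ : Finset (Fin n)), (v i) ^ 2 * w i * (v i * (1 + 2 * A) - 3 * B)
        = (1 + 2 * A) * ((v i) ^ 3 * w i) - (3 * B) * ((v i) ^ 2 * w i) := fun i _ => by ring
    rw [Finset.sum_congr rfl h, Finset.sum_sub_distrib, ← Finset.mul_sum, ← Finset.mul_sum,
      ← hD, ← hC]
    ring
  simp only [hb, h2]
  set F : Fin n → Fin n → ℝ := fun i j =>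
    w i * w j * (v i - v j) ^ 2 * ((v i + v j) * A - 2 * B) with hF
  have hsym : ∀ i j, F i j = F j i := fun i j => by simp only [hF]; ring
  have hdiag : ∀ i, F i i = 0 := fun i => by simp [hF]
  have key : ∀ i j : Fin n, F i j = (if i < j then F i j else 0) + (if j < i then F i j else 0) := by
    intro i j
    rcases lt_trichotomy i j with h | h | h
    · simp [h, lt_asymm h]
    · simp [h, hdiag]
    · simp [h, lt_asymm h]
  have htri : (∑ i, ∑ j, (if j < i then F i j else 0))
      = ∑ i, ∑ j, (if i < j then F i j else 0) := by
    rw [Finset.sum_comm]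
    refine Finset.sum_congr rfl fun i _ => Finset.sum_congr rfl fun j _ => ?_
    by_cases h : i < j <;> simp [h, hsym i j]
  have hfilter : (∑ i, ∑ j ∈ univ.filter (fun j => i < j), F i j)
      = ∑ i, ∑ j, (if i < j then F i j else 0) := by
    refine Finset.sum_congr rfl fun i _ => ?_
    rw [Finset.sum_filter]
  have hT2 : (∑ i, ∑ j, F i j) = 2 * ∑ i, ∑ j ∈ univ.filter (fun j => i < j), F i j := by
    calc (∑ i, ∑ j, F i j)
        = ∑ i, ∑ j, ((if i < j then F i j else 0) + (if j < i then F i j else 0)) := by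
          exact Finset.sum_congr rfl fun i _ => Finset.sum_congr rfl fun j _ => key i j
      _ = (∑ i, ∑ j, (if i < j then F i j else 0)) + ∑ i, ∑ j, (if j < i then F i j else 0) := by
          simp [Finset.sum_add_distrib]
      _ = 2 * ∑ i, ∑ j ∈ univ.filter (fun j => i < j), F i j := by
          rw [htri, hfilter]; ring
  have hinner : ∀ i : Fin n, (∑ j, F i j)
      = (w i * (A * (v i) ^ 3 - 2 * B * (v i) ^ 2)) * A
        + (w i * (- A * (v i) ^ 2 + 4 * B * (v i))) * B
        + (w i * (- A * (v i) - 2 * B)) * C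
        + (w i * A) * D := by
    intro i
    have h : ∀ j ∈ (univ : Finset (Fin n)), F i j
        = (w i * (A * (v i) ^ 3 - 2 * B * (v i) ^ 2)) * w j
          + (w i * (- A * (v i) ^ 2 + 4 * B * (v i))) * (v j * w j)
          + (w i * (- A * (v i) - 2 * B)) * ((v j) ^ 2 * w j)
          + (w i * A) * ((v j) ^ 3 * w j) := fun j _ => by simp only [hF]; ring
    rw [Finset.sum_congr rfl h]
    simp only [Finset.sum_add_distrib, ← Finset.mul_sum, ← hA, ← hB, ← hC, ← hD]
  have hfull : (∑ i, ∑ j, F i j) = 2 * (D * A ^ 2 - 3 * A * B * C + 2 * B ^ 3) := by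
    have h : ∀ i ∈ (univ : Finset (Fin n)), (∑ j, F i j)
        = (A ^ 2) * ((v i) ^ 3 * w i) + (-(3 * A * B)) * ((v i) ^ 2 * w i)
          + (4 * B ^ 2 - A * C) * (v i * w i) + (A * D - 2 * B * C) * w i := by
      intro i _
      rw [hinner i]; ring
    rw [Finset.sum_congr rfl h]
    simp only [Finset.sum_add_distrib, ← Finset.mul_sum, ← hA, ← hB, ← hC, ← hD]
    ring
  have hT : (∑ i, ∑ j ∈ univ.filter (fun j => i < j), F i j)
      = D * A ^ 2 - 3 * A * B * C + 2 * B ^ 3 := by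
    rw [hfull] at hT2; linarith
  rw [hT]; ring


private lemma deriv_aux {n : ℕ} (u v : Fin n → ℝ) (g : ℝ → ℝ)
    (hg : ∀ t : ℝ, g t = Real.log (1 + ∑ s, Real.exp (u s + t * v s))) (t : ℝ) :
    iteratedDeriv 3 g t =
      ((∑ s, (v s) ^ 3 * Real.exp (u s + t * v s)) * (1 + ∑ s, Real.exp (u s + t * v s)) ^ 2
        - 3 * (∑ s, v s * Real.exp (u s + t * v s)) * (∑ s, (v s) ^ 2 * Real.exp (u s + t * v s))
            * (1 + ∑ s, Real.exp (u s + t * v s))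
        + 2 * (∑ s, v s * Real.exp (u s + t * v s)) ^ 3)
        / (1 + ∑ s, Real.exp (u s + t * v s)) ^ 3 := by
  have hterm : ∀ (c : ℝ) (s : Fin n) (x : ℝ),
      HasDerivAt (fun y : ℝ => c * Real.exp (u s + y * v s))
        (c * v s * Real.exp (u s + x * v s)) x := by
    intro c s x
    have h1 : HasDerivAt (fun y : ℝ => u s + y * v s) (v s) x := by
      simpa using ((hasDerivAt_id x).mul_const (v s)).const_add (u s)
    have h2 := (h1.exp).const_mul c
    exact h2.congr_deriv (by ring)
  set S : ℝ → ℝ := fun x => 1 + ∑ s, Real.exp (u s + x * v s) with hSdef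
  set Bf : ℝ → ℝ := fun x => ∑ s, v s * Real.exp (u s + x * v s) with hBdef
  set Cf : ℝ → ℝ := fun x => ∑ s, (v s) ^ 2 * Real.exp (u s + x * v s) with hCdef
  set Df : ℝ → ℝ := fun x => ∑ s, (v s) ^ 3 * Real.exp (u s + x * v s) with hDdef
  show iteratedDeriv 3 g t =
    (Df t * (S t) ^ 2 - 3 * Bf t * Cf t * S t + 2 * (Bf t) ^ 3) / (S t) ^ 3
  have hS0 : ∀ x, S x ≠ 0 := by
    intro x
    have : (0 : ℝ) < S x := by
      simp only [hSdef]
      positivity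
    linarith
  have hS' : ∀ x, HasDerivAt S (Bf x) x := by
    intro x
    simp only [hSdef, hBdef]
    refine HasDerivAt.const_add 1 (HasDerivAt.fun_sum fun s _ => ?_)
    simpa using hterm 1 s x
  have hB' : ∀ x, HasDerivAt Bf (Cf x) x := by
    intro x
    simp only [hBdef, hCdef]
    have h := HasDerivAt.fun_sum (u := Finset.univ) (fun s (_ : s ∈ Finset.univ) => hterm (v s) s x)
    simpa [pow_two, mul_assoc] using h
  have hC' : ∀ x, HasDerivAt Cf (Df x) x := by
    intro x
    simp only [hCdef, hDdef]
    have h := HasDerivAt.fun_sum (u := Finset.univ) (fun s (_ : s ∈ Finset.univ) => hterm ((v s) ^ 2) s x)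
    simpa [pow_succ, mul_assoc] using h
  have hg1 : ∀ x, HasDerivAt g (Bf x / S x) x := by
    intro x
    have hfg : g = fun y => Real.log (S y) := funext fun y => by simp [hg, hSdef]
    rw [hfg]
    exact (hS' x).log (hS0 x)
  have hd1 : deriv g = fun x => Bf x / S x := funext fun x => (hg1 x).deriv
  have hg2 : ∀ x, HasDerivAt (fun y => Bf y / S y)
      ((Cf x * S x - Bf x * Bf x) / (S x) ^ 2) x := fun x => (hB' x).div (hS' x) (hS0 x)
  have hd2 : deriv (deriv g) = fun x => (Cf x * S x - Bf x * Bf x) / (S x) ^ 2 := by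
    rw [hd1]; exact funext fun x => (hg2 x).deriv
  have hg3 : ∀ x, HasDerivAt (fun y => (Cf y * S y - Bf y * Bf y) / (S y) ^ 2)
      (((Df x * S x - Bf x * Cf x) * (S x) ^ 2
        - (Cf x * S x - Bf x * Bf x) * (2 * S x * Bf x)) / ((S x) ^ 2) ^ 2) x := by
    intro x
    have h := (((hC' x).mul (hS' x)).sub ((hB' x).mul (hB' x))).div
      ((hS' x).pow 2) (pow_ne_zero 2 (hS0 x))
    refine h.congr_deriv ?_
    norm_num
    ring
  have h3 : iteratedDeriv 3 g t = deriv (deriv (deriv g)) t := by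
    simp [iteratedDeriv_succ, iteratedDeriv_zero]
  rw [h3, hd2, (hg3 t).deriv]
  have h0 := hS0 t
  field_simp
  ring


/-- Third derivative formula for `g(t) = Φ(u + t v)` with
`Φ(x) = log(1 + Σ_s exp(x_s))` and `r_s(t) = exp(u_s + t v_s)`. -/
theorem stmt_2 (k : ℕ) (hk : 2 ≤ k) (u v : Fin (k - 1) → ℝ)
    (g : ℝ → ℝ) (hg : ∀ t : ℝ, g t = Real.log (1 + ∑ s, Real.exp (u s + t * v s)))
    (r : Fin (k - 1) → ℝ → ℝ) (hr : ∀ s t, r s t = Real.exp (u s + t * v s)) :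
    ∀ t : ℝ, iteratedDeriv 3 g t =
      ((∑ i, ∑ j ∈ Finset.univ.filter (fun j => i < j),
          r i t * r j t * (v i - v j) ^ 2 * (∑ l, (v i + v j - 2 * v l) * r l t))
        + ∑ i, (v i) ^ 2 * r i t *
            (v i * (1 + 2 * ∑ j, r j t) - 3 * ∑ j, v j * r j t))
        / (1 + ∑ s, r s t) ^ 3 := by
  intro t
  rw [deriv_aux u v g hg t]
  simp only [hr]
  congr 1
  exact (alg_aux v (fun s => Real.exp (u s + t * v s))).symm
end

section
/- Let k ≥ 2 be an integer, define Φ : ℝ^{k−1} → ℝ by Φ(x) = log(1 + Σ_{s=1}^{k−1} exp(x_s)) and σ : ℝ^{k−1} → ℝ^{k−1} by σ(x)_i = exp(x_i) / (1 + Σ_{s=1}^{k−1} exp(x_s)). Then for all a, b ∈ ℝ^{k−1}, the Bregman divergence of Φ is at most half the squared Euclidean distance: Φ(b) − Φ(a) − ⟨σ(a), b − a⟩ ≤ (1/2) ‖b − a‖₂². -/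
/-- The softmax map `σ(x)_i = exp(x_i) / (1 + Σ_s exp(x_s))`. -/
noncomputable def sig {m : ℕ} (x : EuclideanSpace ℝ (Fin m)) (i : Fin m) : ℝ :=
  Real.exp (x i) / (1 + ∑ s, Real.exp (x s))

theorem bregman_bound {m : ℕ} (a b : EuclideanSpace ℝ (Fin m)) :
    Real.log (1 + ∑ s, Real.exp (b s)) - Real.log (1 + ∑ s, Real.exp (a s))
      - ∑ i, (Real.exp (a i) / (1 + ∑ s, Real.exp (a s))) * (b i - a i)
      ≤ (1 / 2) * ∑ i, (b i - a i) ^ 2 := by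
  set v : Fin m → ℝ := fun i => b i - a i with hv
  set C : ℝ := ∑ i, v i ^ 2 with hC
  set Z : ℝ → ℝ := fun t => 1 + ∑ i, Real.exp (a i + t * v i) with hZdef
  set Z' : ℝ → ℝ := fun t => ∑ i, v i * Real.exp (a i + t * v i) with hZ'def
  set Z'' : ℝ → ℝ := fun t => ∑ i, v i ^ 2 * Real.exp (a i + t * v i) with hZ''def
  have hZpos : ∀ t, 0 < Z t := by
    intro t
    have : (0:ℝ) ≤ ∑ i, Real.exp (a i + t * v i) :=
      Finset.sum_nonneg fun i _ => (Real.exp_pos _).le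
    simp only [hZdef]; linarith
  have hZne : ∀ t, Z t ≠ 0 := fun t => (hZpos t).ne'
  have hexp : ∀ (t : ℝ) (i : Fin m),
      HasDerivAt (fun t => Real.exp (a i + t * v i)) (v i * Real.exp (a i + t * v i)) t := by
    intro t i
    have h1 : HasDerivAt (fun t : ℝ => a i + t * v i) (v i) t :=
      (hasDerivAt_mul_const (v i)).const_add (a i)
    simpa [mul_comm] using h1.exp
  have hZ : ∀ t, HasDerivAt Z (Z' t) t := by
    intro t
    exact (HasDerivAt.fun_sum (fun i _ => hexp t i)).const_add 1
  have hZ' : ∀ t, HasDerivAt Z' (Z'' t) t := by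
    intro t
    apply HasDerivAt.fun_sum
    intro i _
    have := (hexp t i).const_mul (v i)
    exact this.congr_deriv (by ring)
  set φ : ℝ → ℝ := fun t => Z' t / Z t with hφdef
  have hφ : ∀ t, HasDerivAt φ ((Z'' t * Z t - Z' t * Z' t) / (Z t) ^ 2) t := by
    intro t
    exact (hZ' t).div (hZ t) (hZne t)
  have hφ'le : ∀ t, (Z'' t * Z t - Z' t * Z' t) / (Z t) ^ 2 ≤ C := by
    intro t
    have hZ2 : (0:ℝ) < (Z t) ^ 2 := by positivity
    rw [div_le_iff₀ hZ2]
    have h1 : Z'' t ≤ C * Z t := by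
      have h2 : ∀ i ∈ Finset.univ (α := Fin m),
          v i ^ 2 * Real.exp (a i + t * v i) ≤ v i ^ 2 * Z t := by
        intro i _
        apply mul_le_mul_of_nonneg_left _ (sq_nonneg _)
        have : Real.exp (a i + t * v i) ≤ ∑ j, Real.exp (a j + t * v j) :=
          Finset.single_le_sum (f := fun j => Real.exp (a j + t * v j))
            (fun j _ => (Real.exp_pos _).le) (Finset.mem_univ i)
        simp only [hZdef]; linarith
      calc Z'' t ≤ ∑ i, v i ^ 2 * Z t := Finset.sum_le_sum h2
        _ = C * Z t := by rw [← Finset.sum_mul]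
    nlinarith [sq_nonneg (Z' t), hZpos t, sq_nonneg (Z t)]
  -- h := φ - C t is antitone on [0,1]
  set h : ℝ → ℝ := fun t => φ t - C * t with hhdef
  have hh : ∀ t, HasDerivAt h ((Z'' t * Z t - Z' t * Z' t) / (Z t) ^ 2 - C) t := by
    intro t
    simpa using (hφ t).fun_sub ((hasDerivAt_id t).const_mul C)
  have hanti : AntitoneOn h (Set.Icc 0 1) := by
    apply antitoneOn_of_deriv_nonpos (convex_Icc 0 1)
    · exact (Differentiable.continuous (fun t => (hh t).differentiableAt)).continuousOn
    · exact fun t _ => (hh t).differentiableAt.differentiableWithinAt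
    · intro t ht
      rw [(hh t).deriv]
      linarith [hφ'le t]
  -- g := log Z - t φ(0) - C t²/2
  set g : ℝ → ℝ := fun t => Real.log (Z t) - t * φ 0 - C * t ^ 2 / 2 with hgdef
  have hg : ∀ t, HasDerivAt g (φ t - φ 0 - C * t) t := by
    intro t
    have h1 : HasDerivAt (fun t => Real.log (Z t)) (Z' t / Z t) t := (hZ t).log (hZne t)
    have h2 : HasDerivAt (fun t : ℝ => t * φ 0) (φ 0) t := hasDerivAt_mul_const (φ 0)
    have h3 : HasDerivAt (fun t : ℝ => C * t ^ 2 / 2) (C * t) t := by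
      have := ((hasDerivAt_pow 2 t).const_mul C).div_const 2
      exact this.congr_deriv (by ring)
    exact (h1.sub h2).sub h3
  have hganti : AntitoneOn g (Set.Icc 0 1) := by
    apply antitoneOn_of_deriv_nonpos (convex_Icc 0 1)
    · exact (Differentiable.continuous (fun t => (hg t).differentiableAt)).continuousOn
    · exact fun t _ => (hg t).differentiableAt.differentiableWithinAt
    · intro t ht
      rw [interior_Icc] at ht
      rw [(hg t).deriv]
      have h0mem : (0:ℝ) ∈ Set.Icc (0:ℝ) 1 := by norm_num
      have htmem : t ∈ Set.Icc (0:ℝ) 1 := ⟨ht.1.le, ht.2.le⟩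
      have := hanti h0mem htmem ht.1.le
      simp only [hhdef] at this
      linarith
  have key : g 1 ≤ g 0 := hganti (by norm_num) (by norm_num) zero_le_one
  simp only [hgdef] at key
  have hZ1 : Z 1 = 1 + ∑ s, Real.exp (b s) := by
    simp [hZdef, hv]
  have hZ0 : Z 0 = 1 + ∑ s, Real.exp (a s) := by
    simp [hZdef]
  have hφ0 : φ 0 = ∑ i, (Real.exp (a i) / (1 + ∑ s, Real.exp (a s))) * (b i - a i) := by
    simp only [hφdef, hZ'def, hZ0]
    rw [Finset.sum_div]
    apply Finset.sum_congr rfl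
    intro i _
    simp [hv]
    ring
  rw [hZ1, hZ0, hφ0] at key
  simp only [hv, hC] at key ⊢
  linarith

theorem bregman_bound' {m : ℕ} (a b : EuclideanSpace ℝ (Fin m)) :
    Real.log (1 + ∑ s, Real.exp (b s)) - Real.log (1 + ∑ s, Real.exp (a s))
      - ∑ i, (Real.exp (a i) / (1 + ∑ s, Real.exp (a s))) * (b i - a i)
      ≤ (1 / 2) * ‖b - a‖ ^ 2 := by
  have h := bregman_bound a b
  have hn : ‖b - a‖ ^ 2 = ∑ i, (b i - a i) ^ 2 := by
    rw [EuclideanSpace.norm_eq]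
    rw [Real.sq_sqrt (Finset.sum_nonneg fun i _ => sq_nonneg _)]
    apply Finset.sum_congr rfl
    intro i _
    simp [sq_abs]
  rw [hn]
  exact h

/-- Upper half of Lemma 2: the Bregman divergence of `Φ` is at most half the
squared Euclidean distance. -/
theorem stmt_12 (k : ℕ) (hk : 2 ≤ k) (a b : EuclideanSpace ℝ (Fin (k - 1))) :
    Phi b - Phi a - ∑ i, sig a i * (b i - a i) ≤ (1 / 2) * ‖b - a‖ ^ 2 := by
  simpa [Phi, sig] using bregman_bound' a b
end

section
/- Let k ≥ 2 be an integer, define Φ : ℝ^{k−1} → ℝ by Φ(x) = log(1 + Σ_{s=1}^{k−1} exp(x_s)) and σ : ℝ^{k−1} → ℝ^{k−1} by σ(x)_i = exp(x_i) / (1 + Σ_{s=1}^{k−1} exp(x_s)). For a, v ∈ ℝ^{k−1} let Q_a(v) = Σ_{i=1}^{k−1} σ(a)_i v_i² − ( Σ_{i=1}^{k−1} σ(a)_i v_i )² denote the Hessian quadratic form of Φ at a. Then for all a, v ∈ ℝ^{k−1}: Φ(a + v) − Φ(a) − ⟨σ(a), v⟩ ≥ (1/2) · exp(−5 ‖v‖₂)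 · Q_a(v). -/
lemma exp_cubic_upper {u : ℝ} (h0 : 0 ≤ u) (h1 : u ≤ 1) :
    Real.exp u ≤ 1 + u + u ^ 2 / 2 + 2 / 9 * u ^ 3 := by
  have hb := Real.exp_bound (x := u) (by rw [abs_of_nonneg h0]; exact h1) (n := 3) (by norm_num)
  have hs : ∑ i ∈ Finset.range 3, u ^ i / (Nat.factorial i : ℝ) = 1 + u + u ^ 2 / 2 := by
    simp [Finset.sum_range_succ, Nat.factorial]
  rw [hs, abs_of_nonneg h0] at hb
  have h2 := (abs_le.mp hb).2
  norm_num [Nat.factorial] at h2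
  linarith

lemma key_pointwise (w : ℝ) : 1 + w + w ^ 2 / 2 * Real.exp (-|w|) ≤ Real.exp w := by
  rcases le_or_gt 0 w with h | h
  · rw [abs_of_nonneg h]
    have h1 : 1 + w + w ^ 2 / 2 ≤ Real.exp w := Real.quadratic_le_exp_of_nonneg h
    have h2 : Real.exp (-w) ≤ 1 := Real.exp_le_one_iff.mpr (by linarith)
    nlinarith [sq_nonneg w, Real.exp_pos (-w)]
  · rw [abs_of_neg h]
    set u := -w with hu
    have hu0 : 0 < u := by simp [hu]; linarith
    have hgoal : u ^ 2 / 2 ≤ 1 + (u - 1) * Real.exp u := by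
      rcases le_or_gt u 1 with hc | hc
      · have := exp_cubic_upper hu0.le hc
        nlinarith [Real.exp_pos u]
      · have := Real.quadratic_le_exp_of_nonneg (le_of_lt hu0)
        nlinarith
    have hepos : (0:ℝ) < Real.exp (-u) := Real.exp_pos _
    have hmul : Real.exp u * Real.exp (-u) = 1 := by
      rw [← Real.exp_add]; simp
    -- goal : 1 + w + w^2/2 * exp w ≤ exp w, with w = -u
    have hw : w = -u := by simp [hu]
    rw [hw]
    nlinarith [hgoal, hepos, hmul]

set_option maxHeartbeats 1000000

/-- The Hessian quadratic form of `Φ` at `a` evaluated at `v`: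
`Q_a(v) = Σ_i σ(a)_i v_i² − (Σ_i σ(a)_i v_i)²`. -/
noncomputable def hessQ {m : ℕ} (a v : EuclideanSpace ℝ (Fin m)) : ℝ :=
  ∑ i, sig a i * (v i) ^ 2 - (∑ i, sig a i * v i) ^ 2

/-- Intermediate lower bound in the proof of Lemma 2:
`Φ(a + v) − Φ(a) − ⟨σ(a), v⟩ ≥ (1/2) e^{−5‖v‖} Q_a(v)`. -/
theorem stmt_13 (k : ℕ) (hk : 2 ≤ k) (a v : EuclideanSpace ℝ (Fin (k - 1))) :
    (1 / 2) * Real.exp (-(5 * ‖v‖)) * hessQ a v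
      ≤ Phi (a + v) - Phi a - ∑ i, sig a i * v i := by
  set M := ‖v‖ with hM
  have hM0 : 0 ≤ M := norm_nonneg v
  set S : ℝ := 1 + ∑ s, Real.exp (a s) with hSdef
  have hSpos : 0 < S := by positivity
  have hsig : ∀ i, sig a i = Real.exp (a i) / S := fun i => rfl
  have hppos : ∀ i, 0 < sig a i := fun i => by rw [hsig i]; positivity
  set E : ℝ := ∑ i, sig a i * v i with hE
  have hpsum : ∑ i, sig a i = 1 - 1 / S := by
    simp only [hsig]
    rw [← Finset.sum_div]
    have h1 : ∑ s, Real.exp (a s) = S - 1 := by rw [hSdef]; ring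
    rw [h1]
    field_simp
  have hvle : ∀ i, |v i| ≤ M := by
    intro i
    have h1 : |v i| ^ 2 ≤ M ^ 2 := by
      rw [hM, EuclideanSpace.norm_eq, Real.sq_sqrt (by positivity)]
      calc |v i| ^ 2 = ‖v i‖ ^ 2 := by rw [Real.norm_eq_abs]
        _ ≤ ∑ j, ‖v j‖ ^ 2 :=
          Finset.single_le_sum (f := fun j => ‖v j‖ ^ 2) (fun j _ => sq_nonneg _)
            (Finset.mem_univ i)
    have h2 := Real.sqrt_le_sqrt h1
    rwa [Real.sqrt_sq (abs_nonneg _), Real.sqrt_sq hM0] at h2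
  have hEle : |E| ≤ M := by
    have h0S : 0 < 1 / S := by positivity
    calc |E| ≤ ∑ i, |sig a i * v i| := Finset.abs_sum_le_sum_abs _ _
      _ ≤ ∑ i, sig a i * M := Finset.sum_le_sum (fun i _ => by
            rw [abs_mul, abs_of_pos (hppos i)]
            exact mul_le_mul_of_nonneg_left (hvle i) (hppos i).le)
      _ = (1 - 1 / S) * M := by rw [← Finset.sum_mul, hpsum]
      _ ≤ M := by nlinarith
  have hQid : hessQ a v = (1 / S) * E ^ 2 + ∑ i, sig a i * (v i - E) ^ 2 := by
    have h1 : ∑ i, sig a i * (v i - E) ^ 2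
        = ∑ i, (sig a i * v i ^ 2 - 2 * E * (sig a i * v i) + E ^ 2 * sig a i) :=
      Finset.sum_congr rfl (fun i _ => by ring)
    rw [h1, Finset.sum_add_distrib, Finset.sum_sub_distrib, ← Finset.mul_sum,
      ← Finset.mul_sum, hpsum, ← hE]
    unfold hessQ
    rw [← hE]
    ring
  have hQ0 : 0 ≤ hessQ a v := by
    rw [hQid]
    have h1 : (0:ℝ) ≤ ∑ i, sig a i * (v i - E) ^ 2 :=
      Finset.sum_nonneg (fun i _ => mul_nonneg (hppos i).le (sq_nonneg _))
    have h2 : (0:ℝ) ≤ (1 / S) * E ^ 2 := by positivity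
    linarith
  have hQle : hessQ a v ≤ M ^ 2 := by
    have h1 : ∑ i, sig a i * v i ^ 2 ≤ (1 - 1 / S) * M ^ 2 := by
      rw [← hpsum, Finset.sum_mul]
      refine Finset.sum_le_sum (fun i _ => ?_)
      have : v i ^ 2 ≤ M ^ 2 := by
        have := hvle i
        nlinarith [abs_nonneg (v i), neg_abs_le (v i), le_abs_self (v i)]
      exact mul_le_mul_of_nonneg_left this (hppos i).le
    have h0S : 0 < 1 / S := by positivity
    unfold hessQ
    rw [← hE]
    nlinarith [sq_nonneg E]
  set c : ℝ := Real.exp (-(2 * M)) with hc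
  have hc1 : c ≤ 1 := Real.exp_le_one_iff.mpr (by linarith)
  have hcpos : 0 < c := Real.exp_pos _
  have bound2 : ∀ w : ℝ, |w| ≤ 2 * M → 1 + w + w ^ 2 / 2 * c ≤ Real.exp w := by
    intro w hw
    have h1 := key_pointwise w
    have h2 : c ≤ Real.exp (-|w|) := Real.exp_le_exp.mpr (by linarith)
    nlinarith [sq_nonneg w]
  set T : ℝ := (1 / S) * Real.exp (-E) + ∑ i, sig a i * Real.exp (v i - E) with hT
  have hfact : S * Real.exp E * T = 1 + ∑ s, Real.exp (a s + v s) := by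
    rw [hT, mul_add, Finset.mul_sum]
    congr 1
    · rw [Real.exp_neg]
      field_simp
    · refine Finset.sum_congr rfl (fun i _ => ?_)
      rw [hsig i, Real.exp_add, Real.exp_sub]
      field_simp
  set x : ℝ := c / 2 * hessQ a v with hx
  have hx0 : 0 ≤ x := mul_nonneg (by positivity) hQ0
  have hTge : 1 + x ≤ T := by
    have hterm : ∀ i : Fin (k - 1),
        sig a i * (1 + (v i - E) + (v i - E) ^ 2 / 2 * c) ≤ sig a i * Real.exp (v i - E) := by
      intro i
      refine mul_le_mul_of_nonneg_left (bound2 _ ?_) (hppos i).le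
      calc |v i - E| ≤ |v i| + |E| := abs_sub _ _
        _ ≤ 2 * M := by linarith [hvle i]
    have h0 : (1 / S) * (1 + (-E) + (-E) ^ 2 / 2 * c) ≤ (1 / S) * Real.exp (-E) := by
      refine mul_le_mul_of_nonneg_left (bound2 _ ?_) (by positivity)
      rw [abs_neg]; linarith
    have hsum := Finset.sum_le_sum (s := Finset.univ) (fun i _ => hterm i)
    have hexp : ∑ i, sig a i * (1 + (v i - E) + (v i - E) ^ 2 / 2 * c)
        = ∑ i, (sig a i + (sig a i * v i - E * sig a i) + c / 2 * (sig a i * (v i - E) ^ 2)) :=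
      Finset.sum_congr rfl (fun i _ => by ring)
    rw [hexp, Finset.sum_add_distrib, Finset.sum_add_distrib, Finset.sum_sub_distrib,
      ← Finset.mul_sum, ← Finset.mul_sum, hpsum, ← hE] at hsum
    have := add_le_add h0 hsum
    rw [hT]
    calc 1 + x = (1 / S) * (1 + (-E) + (-E) ^ 2 / 2 * c)
        + ((1 - 1 / S) + (E - E * (1 - 1 / S)) + c / 2 * ∑ i, sig a i * (v i - E) ^ 2) := by
          rw [hx, hQid]; ring
      _ ≤ _ := this
  have hTpos : 0 < T := by linarith
  have hlogT : Phi (a + v) - Phi a - E = Real.log T := by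
    have happly : ∀ s : Fin (k - 1), (a + v) s = a s + v s := fun s => rfl
    have h1 : Phi (a + v) = Real.log (S * Real.exp E * T) := by
      have hsum_eq : ∑ s, Real.exp ((a + v) s) = ∑ s, Real.exp (a s + v s) :=
        Finset.sum_congr rfl (fun s _ => by rw [happly])
      unfold Phi
      rw [hsum_eq, hfact]
    have h2 : Phi a = Real.log S := by unfold Phi; rw [← hSdef]
    rw [h1, h2, Real.log_mul (by positivity) (ne_of_gt hTpos),
      Real.log_mul (ne_of_gt hSpos) (ne_of_gt (Real.exp_pos E)), Real.log_exp]
    ring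
  rw [hlogT]
  have step1 : Real.log (1 + x) ≤ Real.log T := Real.log_le_log (by linarith) hTge
  have step2 : x / (1 + x) ≤ Real.log (1 + x) := by
    have h1 : (0:ℝ) < 1 + x := by linarith
    have h2 := Real.log_le_sub_one_of_pos (show (0:ℝ) < (1 + x)⁻¹ by positivity)
    rw [Real.log_inv] at h2
    have h3 : 1 - (1 + x)⁻¹ = x / (1 + x) := by field_simp; ring
    linarith
  have step3 : Real.exp (-(3 * M)) * x ≤ x / (1 + x) := by
    have h1 : (0:ℝ) < 1 + x := by linarith
    have h2 : 1 + x ≤ Real.exp (3 * M) := by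
      have hq := Real.quadratic_le_exp_of_nonneg (show (0:ℝ) ≤ 3 * M by linarith)
      have hxle : x ≤ M ^ 2 / 2 := by
        rw [hx]; nlinarith
      nlinarith
    rw [le_div_iff₀ h1]
    have h4 : Real.exp (-(3 * M)) * Real.exp (3 * M) = 1 := by
      rw [← Real.exp_add]; simp
    have h5 : Real.exp (-(3 * M)) * x * (1 + x)
        ≤ Real.exp (-(3 * M)) * x * Real.exp (3 * M) :=
      mul_le_mul_of_nonneg_left h2 (mul_nonneg (Real.exp_pos _).le hx0)
    have h6 : Real.exp (-(3 * M)) * x * Real.exp (3 * M) = x := by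
      linear_combination x * h4
    linarith
  have heq : (1 / 2) * Real.exp (-(5 * M)) * hessQ a v = Real.exp (-(3 * M)) * x := by
    have h5 : Real.exp (-(3 * M)) * Real.exp (-(2 * M)) = Real.exp (-(5 * M)) := by
      rw [← Real.exp_add]; ring_nf
    rw [hx, hc, ← h5]
    ring
  linarith [heq.le.trans (step3.trans (step2.trans step1))]
end

section
/- Let k ≥ 2 be an integer, define Φ : ℝ^{k−1} → ℝ by Φ(x) = log(1 + Σ_{s=1}^{k−1} exp(x_s)) and σ : ℝ^{k−1} → ℝ^{k−1} by σ(x)_i = exp(x_i) / (1 + Σ_{s=1}^{k−1} exp(x_s)). For a ∈ ℝ^{k−1}, let λ_min(a) denote the smallest eigenvalue of the Hessian matrix diag(σ(a)) − σ(a)σ(a)ᵀ of Φ at a (equivalently, the infimum over unit vectors u ∈ ℝ^{k−1} of Q_a(u) = Σ_i σ(a)_i u_i² − (Σ_i σ(a)_i u_i)²). Then for all a, b ∈ ℝ^{k−1}, with q₀ = max(‖a‖₂, ‖b‖₂): Φ(b) − Φ(a) − ⟨σ(a), b − a⟩ ≥ (1/2) · λ_min(a) · exp(−10 q₀) · ‖b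 − a‖₂². -/
/-- The smallest eigenvalue of the Hessian `diag(σ(a)) − σ(a)σ(a)ᵀ` of `Φ` at `a`:
the infimum of its quadratic form over unit vectors. -/
noncomputable def lamMin {m : ℕ} (a : EuclideanSpace ℝ (Fin m)) : ℝ :=
  ⨅ u : Metric.sphere (0 : EuclideanSpace ℝ (Fin m)) 1, hessQ a (u : EuclideanSpace ℝ (Fin m))

lemma Dpos {m : ℕ} (x : EuclideanSpace ℝ (Fin m)) : 0 < 1 + ∑ s, Real.exp (x s) := by
  positivity

lemma sig_pos {m : ℕ} (x : EuclideanSpace ℝ (Fin m)) (i : Fin m) : 0 < sig x i :=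
  div_pos (Real.exp_pos _) (Dpos x)

lemma one_sub_sum_sig {m : ℕ} (x : EuclideanSpace ℝ (Fin m)) :
    1 - ∑ i, sig x i = 1 / (1 + ∑ s, Real.exp (x s)) := by
  unfold sig
  rw [← Finset.sum_div]
  field_simp
  ring

lemma hessQ_eq' {m : ℕ} (x v : EuclideanSpace ℝ (Fin m)) (c : ℝ) :
    (∑ i, sig x i * (v i - c) ^ 2) + (1 - ∑ i, sig x i) * c ^ 2
      = hessQ x v + (c - ∑ j, sig x j * v j) ^ 2 := by
  have h1 : ∀ i, sig x i * (v i - c) ^ 2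
      = sig x i * v i ^ 2 - 2 * c * (sig x i * v i) + c ^ 2 * sig x i := by
    intro i; ring
  unfold hessQ
  rw [Finset.sum_congr rfl (fun i _ => h1 i)]
  rw [Finset.sum_add_distrib, Finset.sum_sub_distrib, ← Finset.mul_sum, ← Finset.mul_sum]
  ring

lemma hessQ_eq {m : ℕ} (x v : EuclideanSpace ℝ (Fin m)) :
    hessQ x v = (∑ i, sig x i * (v i - ∑ j, sig x j * v j) ^ 2)
      + (1 - ∑ i, sig x i) * (∑ j, sig x j * v j) ^ 2 := by
  have := hessQ_eq' x v (∑ j, sig x j * v j)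
  simp at this
  linarith

lemma hessQ_nonneg {m : ℕ} (x v : EuclideanSpace ℝ (Fin m)) : 0 ≤ hessQ x v := by
  rw [hessQ_eq]
  have h0 : 0 ≤ 1 - ∑ i, sig x i := by
    rw [one_sub_sum_sig]
    exact le_of_lt (div_pos one_pos (Dpos x))
  have : 0 ≤ ∑ i, sig x i * (v i - ∑ j, sig x j * v j) ^ 2 :=
    Finset.sum_nonneg fun i _ => mul_nonneg (sig_pos x i).le (sq_nonneg _)
  nlinarith [sq_nonneg (∑ j, sig x j * v j)]

lemma D_ratio {m : ℕ} {x a : EuclideanSpace ℝ (Fin m)} {q : ℝ} (hq : 0 ≤ q)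
    (hx : ∀ i, |x i| ≤ q) (ha : ∀ i, |a i| ≤ q) :
    (1 + ∑ s, Real.exp (x s)) ≤ Real.exp (2 * q) * (1 + ∑ s, Real.exp (a s)) := by
  have h1 : (1 : ℝ) ≤ Real.exp (2 * q) := Real.one_le_exp (by linarith)
  have h2 : ∀ s, Real.exp (x s) ≤ Real.exp (2 * q) * Real.exp (a s) := fun s => by
    rw [← Real.exp_add]
    exact Real.exp_le_exp.2 (by
      have h3 := abs_le.1 (hx s); have h4 := abs_le.1 (ha s); linarith)
  have h5 : ∑ s, Real.exp (x s) ≤ ∑ s, Real.exp (2 * q) * Real.exp (a s) :=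
    Finset.sum_le_sum fun s _ => h2 s
  rw [← Finset.mul_sum] at h5
  rw [mul_add, mul_one]
  linarith

lemma sig_ratio {m : ℕ} {x a : EuclideanSpace ℝ (Fin m)} {q : ℝ} (hq : 0 ≤ q)
    (hx : ∀ i, |x i| ≤ q) (ha : ∀ i, |a i| ≤ q) (i : Fin m) :
    Real.exp (-(4 * q)) * sig a i ≤ sig x i := by
  have hD := D_ratio hq hx ha
  have hDx := Dpos x; have hDa := Dpos a
  have hnum : Real.exp (-(2 * q)) * Real.exp (a i) ≤ Real.exp (x i) := by
    rw [← Real.exp_add]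
    exact Real.exp_le_exp.2 (by
      have h3 := abs_le.1 (hx i); have h4 := abs_le.1 (ha i); linarith)
  have hmul : Real.exp (-(4 * q)) * Real.exp (2 * q) = Real.exp (-(2 * q)) := by
    rw [← Real.exp_add]; ring_nf
  unfold sig
  rw [mul_div_assoc', div_le_div_iff₀ hDa hDx]
  have e4 := (Real.exp_pos (-(4 * q))).le
  have eA := (Real.exp_pos (a i)).le
  have step1 := mul_le_mul_of_nonneg_left hD (mul_nonneg e4 eA)
  have step2 := mul_le_mul_of_nonneg_right hnum hDa.le
  have hrw : Real.exp (-(4 * q)) * Real.exp (a i) * (Real.exp (2 * q) * (1 + ∑ s, Real.exp (a s)))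
      = Real.exp (-(2 * q)) * Real.exp (a i) * (1 + ∑ s, Real.exp (a s)) := by
    rw [← hmul]; ring
  rw [hrw] at step1
  linarith

lemma sig0_ratio {m : ℕ} {x a : EuclideanSpace ℝ (Fin m)} {q : ℝ} (hq : 0 ≤ q)
    (hx : ∀ i, |x i| ≤ q) (ha : ∀ i, |a i| ≤ q) :
    Real.exp (-(4 * q)) * (1 - ∑ i, sig a i) ≤ 1 - ∑ i, sig x i := by
  have hD := D_ratio hq hx ha
  have hDx := Dpos x; have hDa := Dpos a
  rw [one_sub_sum_sig, one_sub_sum_sig]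
  rw [mul_one_div, div_le_div_iff₀ hDa hDx]
  have hmul : Real.exp (-(4 * q)) * Real.exp (2 * q) = Real.exp (-(2 * q)) := by
    rw [← Real.exp_add]; ring_nf
  have h1 : Real.exp (-(2 * q)) ≤ 1 := Real.exp_le_one_iff.2 (by linarith)
  have e4 := (Real.exp_pos (-(4 * q))).le
  nlinarith [mul_le_mul_of_nonneg_left hD e4]

lemma hessQ_compare {m : ℕ} {x a : EuclideanSpace ℝ (Fin m)} {q : ℝ} (hq : 0 ≤ q)
    (hx : ∀ i, |x i| ≤ q) (ha : ∀ i, |a i| ≤ q) (v : EuclideanSpace ℝ (Fin m)) :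
    Real.exp (-(4 * q)) * hessQ a v ≤ hessQ x v := by
  set c := ∑ j, sig x j * v j with hc
  have h1 : ∑ i, Real.exp (-(4 * q)) * (sig a i * (v i - c) ^ 2)
      ≤ ∑ i, sig x i * (v i - c) ^ 2 :=
    Finset.sum_le_sum fun i _ => by
      rw [← mul_assoc]
      exact mul_le_mul_of_nonneg_right (sig_ratio hq hx ha i) (sq_nonneg _)
  have h2 : Real.exp (-(4 * q)) * ((1 - ∑ i, sig a i) * c ^ 2)
      ≤ (1 - ∑ i, sig x i) * c ^ 2 := by
    rw [← mul_assoc]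
    exact mul_le_mul_of_nonneg_right (sig0_ratio hq hx ha) (sq_nonneg _)
  rw [← Finset.mul_sum] at h1
  have key := hessQ_eq' a v c
  have key2 := hessQ_eq x v
  have e4 := (Real.exp_pos (-(4 * q))).le
  nlinarith [sq_nonneg (c - ∑ j, sig a j * v j)]

lemma hessQ_smul {m : ℕ} (x v : EuclideanSpace ℝ (Fin m)) (t : ℝ) :
    hessQ x (t • v) = t ^ 2 * hessQ x v := by
  unfold hessQ
  have h1 : ∀ i, sig x i * ((t • v) i) ^ 2 = t ^ 2 * (sig x i * v i ^ 2) := by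
    intro i; simp [smul_eq_mul]; ring
  have h2 : ∀ i, sig x i * ((t • v) i) = t * (sig x i * v i) := by
    intro i; simp [smul_eq_mul]; ring
  rw [Finset.sum_congr rfl (fun i _ => h1 i), Finset.sum_congr rfl (fun i _ => h2 i),
    ← Finset.mul_sum, ← Finset.mul_sum]
  ring

lemma lamMin_le {m : ℕ} (a v : EuclideanSpace ℝ (Fin m)) :
    lamMin a * ‖v‖ ^ 2 ≤ hessQ a v := by
  have bdd : BddBelow (Set.range fun u : Metric.sphere (0 : EuclideanSpace ℝ (Fin m)) 1 =>
      hessQ a (u : EuclideanSpace ℝ (Fin m))) := by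
    refine ⟨0, ?_⟩
    rintro _ ⟨u, rfl⟩
    exact hessQ_nonneg _ _
  by_cases hv : v = 0
  · subst hv
    simp only [norm_zero]
    have : hessQ a (0 : EuclideanSpace ℝ (Fin m)) = 0 := by
      unfold hessQ
      simp
    rw [this]
    ring_nf
    exact le_refl _
  · have hnv : (0 : ℝ) < ‖v‖ := norm_pos_iff.2 hv
    set u : EuclideanSpace ℝ (Fin m) := ‖v‖⁻¹ • v with hu
    have hun : ‖u‖ = 1 := by
      rw [hu, norm_smul, norm_inv, norm_norm, inv_mul_cancel₀ hnv.ne']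
    have hmem : u ∈ Metric.sphere (0 : EuclideanSpace ℝ (Fin m)) 1 := by
      simp [mem_sphere_zero_iff_norm, hun]
    have hle : lamMin a ≤ hessQ a u := ciInf_le bdd (⟨u, hmem⟩ : Metric.sphere (0 : EuclideanSpace ℝ (Fin m)) 1)
    have hq : hessQ a u = ‖v‖⁻¹ ^ 2 * hessQ a v := hessQ_smul a v ‖v‖⁻¹
    rw [hq] at hle
    have := mul_le_mul_of_nonneg_right hle (sq_nonneg ‖v‖)
    calc lamMin a * ‖v‖ ^ 2 ≤ ‖v‖⁻¹ ^ 2 * hessQ a v * ‖v‖ ^ 2 := this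
      _ = hessQ a v := by field_simp

lemma coord_abs_le_norm {m : ℕ} (x : EuclideanSpace ℝ (Fin m)) (i : Fin m) : |x i| ≤ ‖x‖ := by
  rw [EuclideanSpace.norm_eq]
  rw [show |x i| = Real.sqrt ((x i) ^ 2) from (Real.sqrt_sq_eq_abs _).symm]
  apply Real.sqrt_le_sqrt
  have := Finset.single_le_sum (f := fun j => ‖x j‖ ^ 2) (fun j _ => sq_nonneg _)
    (Finset.mem_univ i)
  simpa [Real.norm_eq_abs, sq_abs] using this


set_option maxHeartbeats 1000000 in
/-- Lower half of Lemma 2: the Bregman divergence of `Φ` is bounded below by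
`(1/2) λ_min(a) e^{−10 q₀} ‖b − a‖²` with `q₀ = max(‖a‖, ‖b‖)`. -/
theorem stmt_14 (k : ℕ) (hk : 2 ≤ k) (a b : EuclideanSpace ℝ (Fin (k - 1))) :
    (1 / 2) * lamMin a * Real.exp (-(10 * max ‖a‖ ‖b‖)) * ‖b - a‖ ^ 2
      ≤ Phi b - Phi a - ∑ i, sig a i * (b i - a i) := by
  set q : ℝ := max ‖a‖ ‖b‖ with hqdef
  have hq0 : (0 : ℝ) ≤ q := le_trans (norm_nonneg a) (le_max_left _ _)
  set w : EuclideanSpace ℝ (Fin (k - 1)) := b - a with hw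
  set L : ℝ := Real.exp (-(10 * q)) * (lamMin a * ‖w‖ ^ 2) with hL
  set v : Fin (k - 1) → ℝ := fun i => b i - a i with hv
  have hwv : ∀ i, w i = v i := fun i => by simp [hw, hv]
  -- scalar functions
  set D : ℝ → ℝ := fun t => 1 + ∑ s, Real.exp (a s + t * v s) with hD_def
  set N : ℝ → ℝ := fun t => ∑ s, v s * Real.exp (a s + t * v s) with hN_def
  set M : ℝ → ℝ := fun t => ∑ s, v s ^ 2 * Real.exp (a s + t * v s) with hM_def
  set g : ℝ → ℝ := fun t => Real.log (D t) with hg_def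
  set g1 : ℝ → ℝ := fun t => N t / D t with hg1_def
  have hDpos : ∀ t, 0 < D t := fun t => by
    have : 0 ≤ ∑ s, Real.exp (a s + t * v s) :=
      Finset.sum_nonneg fun s _ => (Real.exp_pos _).le
    simp only [hD_def]; linarith
  have hE : ∀ (i : Fin (k - 1)) (t : ℝ),
      HasDerivAt (fun t => Real.exp (a i + t * v i)) (v i * Real.exp (a i + t * v i)) t := by
    intro i t
    have h1 : HasDerivAt (fun t : ℝ => a i + t * v i) (v i) t := by
      simpa using (hasDerivAt_mul_const (v i)).const_add (a i)
    simpa [mul_comm] using h1.exp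
  have hD : ∀ t, HasDerivAt D (N t) t := fun t => by
    simpa [hD_def, hN_def] using (HasDerivAt.sum fun i _ => hE i t).const_add 1
  have hN : ∀ t, HasDerivAt N (M t) t := fun t => by
    refine HasDerivAt.fun_sum fun i _ => ?_
    have := (hE i t).const_mul (v i)
    refine this.congr_deriv ?_
    ring
  have hg : ∀ t, HasDerivAt g (g1 t) t := fun t => (hD t).log (hDpos t).ne'
  have hg1 : ∀ t, HasDerivAt g1 (M t / D t - (N t / D t) ^ 2) t := fun t => by
    have h := (hN t).div (hD t) (hDpos t).ne'
    refine h.congr_deriv ?_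
    have hD0 := (hDpos t).ne'
    field_simp
  -- the segment points
  have hseg : ∀ t : ℝ, t ∈ Set.Icc (0 : ℝ) 1 → L ≤ M t / D t - (N t / D t) ^ 2 := by
    intro t ht
    set x : EuclideanSpace ℝ (Fin (k - 1)) := a + t • (b - a) with hx_def
    have hxi : ∀ i, x i = a i + t * v i := fun i => by
      simp [hx_def, hv]
    -- hessQ x w equals the second derivative
    have hsig : ∀ i, sig x i = Real.exp (a i + t * v i) / D t := by
      intro i
      unfold sig
      rw [hxi i]
      have hden : (∑ s, Real.exp (x s)) = ∑ s, Real.exp (a s + t * v s) :=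
        Finset.sum_congr rfl fun s _ => by rw [hxi s]
      simp only [hD_def]
      rw [hden]
    have hQx : hessQ x w = M t / D t - (N t / D t) ^ 2 := by
      unfold hessQ
      have e1 : ∑ i, sig x i * (w i) ^ 2 = M t / D t := by
        rw [hM_def]
        simp only []
        rw [Finset.sum_div]
        exact Finset.sum_congr rfl fun i _ => by rw [hsig i, hwv i]; ring
      have e2 : ∑ i, sig x i * w i = N t / D t := by
        rw [hN_def]
        simp only []
        rw [Finset.sum_div]
        exact Finset.sum_congr rfl fun i _ => by rw [hsig i, hwv i]; ring
      rw [e1, e2]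
    -- norm bound along segment
    have hxnorm : ‖x‖ ≤ q := by
      have hrw : x = (1 - t) • a + t • b := by
        rw [hx_def]; rw [smul_sub, sub_smul, one_smul]; abel
      rw [hrw]
      calc ‖(1 - t) • a + t • b‖ ≤ ‖(1 - t) • a‖ + ‖t • b‖ := norm_add_le _ _
        _ = |1 - t| * ‖a‖ + |t| * ‖b‖ := by rw [norm_smul, norm_smul, Real.norm_eq_abs, Real.norm_eq_abs]
        _ = (1 - t) * ‖a‖ + t * ‖b‖ := by
            rw [abs_of_nonneg (by linarith [ht.2] : (0:ℝ) ≤ 1 - t), abs_of_nonneg ht.1]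
        _ ≤ (1 - t) * q + t * q := by
            have h1 : ‖a‖ ≤ q := le_max_left _ _
            have h2 : ‖b‖ ≤ q := le_max_right _ _
            have := ht.1; have := ht.2
            nlinarith
        _ = q := by ring
    have hxc : ∀ i, |x i| ≤ q := fun i => le_trans (coord_abs_le_norm x i) hxnorm
    have hac : ∀ i, |a i| ≤ q := fun i =>
      le_trans (coord_abs_le_norm a i) (le_max_left _ _)
    have hcomp := hessQ_compare hq0 hxc hac w
    have hlam := lamMin_le a w
    have hlam0 : 0 ≤ lamMin a := by
      haveI : Nonempty (Metric.sphere (0 : EuclideanSpace ℝ (Fin (k - 1))) 1) := by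
        refine ⟨⟨EuclideanSpace.single (⟨0, by omega⟩ : Fin (k - 1)) (1 : ℝ), ?_⟩⟩
        simp [mem_sphere_zero_iff_norm, EuclideanSpace.norm_single]
      exact le_ciInf fun u => hessQ_nonneg a (u : EuclideanSpace ℝ (Fin (k - 1)))
    have hexp : Real.exp (-(10 * q)) ≤ Real.exp (-(4 * q)) :=
      Real.exp_le_exp.2 (by linarith)
    rw [← hQx]
    calc L = Real.exp (-(10 * q)) * (lamMin a * ‖w‖ ^ 2) := hL
      _ ≤ Real.exp (-(4 * q)) * (lamMin a * ‖w‖ ^ 2) := by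
          apply mul_le_mul_of_nonneg_right hexp
          exact mul_nonneg hlam0 (sq_nonneg _)
      _ ≤ Real.exp (-(4 * q)) * hessQ a w := by
          apply mul_le_mul_of_nonneg_left _ (Real.exp_pos _).le
          linarith
      _ ≤ hessQ x w := hcomp
  -- Taylor via double monotonicity
  set h1f : ℝ → ℝ := fun t => g1 t - g1 0 - L * t with hh1_def
  set hf : ℝ → ℝ := fun t => g t - g 0 - t * g1 0 - L / 2 * t ^ 2 with hhf_def
  have hh1deriv : ∀ t, HasDerivAt h1f (M t / D t - (N t / D t) ^ 2 - L) t := fun t => by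
    have := ((hg1 t).sub_const (g1 0)).fun_sub ((hasDerivAt_id t).const_mul L)
    simpa [hh1_def, mul_comm] using this
  have hhfderiv : ∀ t, HasDerivAt hf (h1f t) t := fun t => by
    have hp : HasDerivAt (fun t : ℝ => L / 2 * t ^ 2) (L * t) t := by
      have := (hasDerivAt_pow 2 t).const_mul (L / 2)
      refine this.congr_deriv ?_
      ring
    have := (((hg t).sub_const (g 0)).fun_sub (hasDerivAt_mul_const (g1 0))).fun_sub hp
    simpa [hh1_def, hhf_def] using this
  have hmono1 : MonotoneOn h1f (Set.Icc (0 : ℝ) 1) := by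
    apply monotoneOn_of_deriv_nonneg (convex_Icc 0 1)
    · exact (Differentiable.continuous fun t => (hh1deriv t).differentiableAt).continuousOn
    · exact fun t _ => (hh1deriv t).differentiableAt.differentiableWithinAt
    · intro t ht
      rw [interior_Icc] at ht
      rw [(hh1deriv t).deriv]
      have := hseg t ⟨ht.1.le, ht.2.le⟩
      linarith
  have hh1nonneg : ∀ t ∈ Set.Icc (0 : ℝ) 1, 0 ≤ h1f t := by
    intro t ht
    have h0 : h1f 0 = 0 := by simp [hh1_def]
    have := hmono1 (Set.left_mem_Icc.2 zero_le_one) ht ht.1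
    linarith
  have hmono2 : MonotoneOn hf (Set.Icc (0 : ℝ) 1) := by
    apply monotoneOn_of_deriv_nonneg (convex_Icc 0 1)
    · exact (Differentiable.continuous fun t => (hhfderiv t).differentiableAt).continuousOn
    · exact fun t _ => (hhfderiv t).differentiableAt.differentiableWithinAt
    · intro t ht
      rw [interior_Icc] at ht
      rw [(hhfderiv t).deriv]
      exact hh1nonneg t ⟨ht.1.le, ht.2.le⟩
  have hfinal : 0 ≤ hf 1 := by
    have h0 : hf 0 = 0 := by simp [hhf_def]
    have := hmono2 (Set.left_mem_Icc.2 zero_le_one) (Set.right_mem_Icc.2 zero_le_one) zero_le_one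
    linarith
  -- translate back
  have hg1eq : Phi b = g 1 := by
    unfold Phi
    have hsum : ∑ s, Real.exp (a s + 1 * v s) = ∑ s, Real.exp (b s) :=
      Finset.sum_congr rfl fun s _ => by simp [hv]
    simp only [hg_def, hD_def]
    rw [hsum]
  have hg0eq : Phi a = g 0 := by
    unfold Phi
    have hsum : ∑ s, Real.exp (a s + 0 * v s) = ∑ s, Real.exp (a s) :=
      Finset.sum_congr rfl fun s _ => by simp
    simp only [hg_def, hD_def]
    rw [hsum]
  have hgp0 : ∑ i, sig a i * (b i - a i) = g1 0 := by
    simp only [hg1_def, hN_def, hD_def]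
    rw [Finset.sum_div]
    refine Finset.sum_congr rfl fun i _ => ?_
    unfold sig
    rw [hv]
    simp only [zero_mul, add_zero]
    ring
  have hL2 : (1 / 2) * lamMin a * Real.exp (-(10 * q)) * ‖b - a‖ ^ 2 = L / 2 := by
    rw [hL, hw]; ring
  rw [hL2, hg1eq, hg0eq, hgp0]
  simp only [hhf_def] at hfinal
  nlinarith [hfinal]
end

section
/- Let p ≥ 1 be an integer, R > 0, and let F : ℝ^p → ℝ be a three times continuously differentiable convex function such that for all u, v ∈ ℝ^p, the function g(t) = F(u + t v) satisfies |g'''(t)| ≤ R ‖v‖₂ g''(t) for all t ∈ ℝ. Then for all w ∈ ℝ^p and all v ∈ ℝ^p with v ≠ 0: F(w + v) ≤ F(w) + ⟨∇F(w), v⟩ + ( vᵀ ∇²F(w) v / (R² ‖v‖₂²) ) · ( exp(R ‖v‖₂) − R ‖v‖₂ − 1 ), where ∇²F(w) denotes the Hessian of F at w and vᵀ ∇²F(w) v is the second directional derivative (d²/dt²)|_{t=0} F(w + t v). -/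
open Real Set


/-- Second property of `R`-modified self-concordance (Bach 2010, Proposition 1):
upper Taylor-type bound
`F(w+v) ≤ F(w) + ⟨∇F(w), v⟩ + (vᵀ∇²F(w)v / (R²‖v‖²)) (e^{R‖v‖} − R‖v‖ − 1)`,
where `⟨∇F(w), v⟩` is the directional derivative `fderiv ℝ F w v` and
`vᵀ∇²F(w)v` is the second directional derivative `(d²/dt²)|₀ F(w + t v)`. -/
theorem stmt_16 (p : ℕ) (hp : 1 ≤ p) (R : ℝ) (hR : 0 < R)
    (F : EuclideanSpace ℝ (Fin p) → ℝ)
    (hF : ContDiff ℝ 3 F) (hconv : ConvexOn ℝ Set.univ F)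
    (hsc : ∀ u v : EuclideanSpace ℝ (Fin p), ∀ t : ℝ,
      |iteratedDeriv 3 (fun s : ℝ => F (u + s • v)) t|
        ≤ R * ‖v‖ * iteratedDeriv 2 (fun s : ℝ => F (u + s • v)) t)
    (w v : EuclideanSpace ℝ (Fin p)) (hv : v ≠ 0) :
    F (w + v)
      ≤ F w + fderiv ℝ F w v
        + (iteratedDeriv 2 (fun s : ℝ => F (w + s • v)) 0 / (R ^ 2 * ‖v‖ ^ 2))
          * (Real.exp (R * ‖v‖) - R * ‖v‖ - 1) := by
  set g : ℝ → ℝ := fun s : ℝ => F (w + s • v) with hgdef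
  set c : ℝ := R * ‖v‖ with hcdef
  have hc : 0 < c := mul_pos hR (norm_pos_iff.mpr hv)
  -- smoothness of g
  have hg3 : ContDiff ℝ 3 g := hF.comp (contDiff_const.add (contDiff_id.smul contDiff_const))
  have hg3' : ContDiff ℝ (2+1 : ℕ) g := by exact_mod_cast hg3
  have hdg2 : ContDiff ℝ 2 (deriv g) := (contDiff_succ_iff_deriv.mp hg3').2.2
  have hdg2' : ContDiff ℝ (1+1 : ℕ) (deriv g) := by exact_mod_cast hdg2
  have hddg1 : ContDiff ℝ 1 (deriv (deriv g)) := (contDiff_succ_iff_deriv.mp hdg2').2.2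
  set h : ℝ → ℝ := deriv (deriv g) with hhdef
  have hh2 : ∀ t, iteratedDeriv 2 g t = h t := by
    intro t
    rw [iteratedDeriv_succ, iteratedDeriv_one]
  have hh3 : ∀ t, iteratedDeriv 3 g t = deriv h t := by
    intro t
    rw [iteratedDeriv_succ, iteratedDeriv_succ, iteratedDeriv_one]
  -- the self-concordance bound in terms of h
  have hbound : ∀ t : ℝ, |deriv h t| ≤ c * h t := by
    intro t
    have := hsc w v t
    rw [hh2, hh3] at this
    exact this
  -- h is nonnegative
  have hpos : ∀ t : ℝ, 0 ≤ h t := by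
    intro t
    have h1 : (0:ℝ) ≤ |deriv h t| := abs_nonneg _
    nlinarith [hbound t]
  set h0 : ℝ := h 0 with hh0def
  have hh0 : 0 ≤ h0 := hpos 0
  -- differentiability facts
  have hgdiff : Differentiable ℝ g := hg3.differentiable (by norm_num)
  have hdgdiff : Differentiable ℝ (deriv g) := hdg2.differentiable (by norm_num)
  have hhdiff : Differentiable ℝ h := hddg1.differentiable one_ne_zero
  -- Gronwall: h t ≤ h0 * exp (c * t) on [0,1]
  have gron : ∀ t ∈ Icc (0:ℝ) 1, h t ≤ h0 * Real.exp (c * t) := by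
    intro t ht
    have := norm_le_gronwallBound_of_norm_deriv_right_le (f := h) (f' := deriv h)
      (δ := h0) (K := c) (ε := 0) (a := 0) (b := 1)
      (hhdiff.continuous.continuousOn)
      (fun x _ => (hhdiff x).hasDerivAt.hasDerivWithinAt)
      (by rw [Real.norm_of_nonneg (hpos 0)])
      (fun x _ => by
        rw [Real.norm_eq_abs, Real.norm_of_nonneg (hpos x), add_zero]
        exact hbound x)
      t ht
    rw [Real.norm_of_nonneg (hpos t), gronwallBound_ε0, sub_zero] at this
    exact this
  -- first comparison: deriv g t ≤ deriv g 0 + (h0/c) * (exp (c t) - 1) on [0,1]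
  set A : ℝ → ℝ := fun t => deriv g 0 + (h0 / c) * (Real.exp (c * t) - 1) - deriv g t with hAdef
  have hA0 : A 0 = 0 := by simp [hAdef]
  have hAderiv : ∀ t : ℝ, HasDerivAt A (h0 * Real.exp (c * t) - h t) t := by
    intro t
    have h1 : HasDerivAt (fun t : ℝ => Real.exp (c * t)) (c * Real.exp (c * t)) t := by
      simpa [mul_comm] using ((hasDerivAt_id t).const_mul c).exp
    have h2 : HasDerivAt (fun t => deriv g 0 + (h0 / c) * (Real.exp (c * t) - 1))
        ((h0 / c) * (c * Real.exp (c * t))) t :=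
      (((h1.sub_const 1).const_mul (h0 / c))).const_add _
    have h3 : HasDerivAt (deriv g) (h t) t := (hdgdiff t).hasDerivAt
    have := h2.sub h3
    have heq : (h0 / c) * (c * Real.exp (c * t)) = h0 * Real.exp (c * t) := by
      field_simp
    rwa [heq] at this
  have hAmono : MonotoneOn A (Icc 0 1) := by
    apply monotoneOn_of_deriv_nonneg (convex_Icc 0 1)
    · exact (Continuous.continuousOn (by
        have : ∀ t, A t = deriv g 0 + (h0 / c) * (Real.exp (c * t) - 1) - deriv g t := fun _ => rfl
        exact continuous_const.add ((continuous_const.mul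
          ((Real.continuous_exp.comp (continuous_const.mul continuous_id)).sub
            continuous_const))) |>.sub hdgdiff.continuous))
    · intro x _
      exact ((hAderiv x).differentiableAt).differentiableWithinAt
    · intro x hx
      rw [(hAderiv x).deriv]
      have hx' : x ∈ Icc (0:ℝ) 1 := by
        rw [interior_Icc] at hx; exact ⟨hx.1.le, hx.2.le⟩
      linarith [gron x hx']
  have hAnn : ∀ t ∈ Icc (0:ℝ) 1, 0 ≤ A t := by
    intro t ht
    have := hAmono (left_mem_Icc.mpr zero_le_one) ht ht.1
    rwa [hA0] at this
  -- second comparison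
  set B : ℝ → ℝ := fun t =>
    g 0 + deriv g 0 * t + (h0 / c ^ 2) * (Real.exp (c * t) - c * t - 1) - g t with hBdef
  have hB0 : B 0 = 0 := by simp [hBdef]
  have hBderiv : ∀ t : ℝ, HasDerivAt B (A t) t := by
    intro t
    have h1 : HasDerivAt (fun t : ℝ => Real.exp (c * t)) (c * Real.exp (c * t)) t := by
      simpa [mul_comm] using ((hasDerivAt_id t).const_mul c).exp
    have h2 : HasDerivAt (fun t : ℝ => Real.exp (c * t) - c * t - 1)
        (c * Real.exp (c * t) - c) t := by
      simpa using (h1.sub ((hasDerivAt_id t).const_mul c)).sub_const 1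
    have h3 : HasDerivAt (fun t : ℝ =>
        g 0 + deriv g 0 * t + (h0 / c ^ 2) * (Real.exp (c * t) - c * t - 1))
        (deriv g 0 + (h0 / c ^ 2) * (c * Real.exp (c * t) - c)) t := by
      have := ((hasDerivAt_id t).const_mul (deriv g 0)).const_add (g 0)
      simpa [mul_one, Pi.add_def] using this.add (h2.const_mul (h0 / c ^ 2))
    have h4 : HasDerivAt g (deriv g t) t := (hgdiff t).hasDerivAt
    have := h3.sub h4
    have heq : deriv g 0 + (h0 / c ^ 2) * (c * Real.exp (c * t) - c) - deriv g t = A t := by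
      rw [hAdef]
      have : (h0 / c ^ 2) * (c * Real.exp (c * t) - c) = (h0 / c) * (Real.exp (c * t) - 1) := by
        field_simp
      rw [this]
    rwa [heq] at this
  have hBmono : MonotoneOn B (Icc 0 1) := by
    apply monotoneOn_of_deriv_nonneg (convex_Icc 0 1)
    · exact Continuous.continuousOn (by
        fun_prop)
    · intro x _
      exact ((hBderiv x).differentiableAt).differentiableWithinAt
    · intro x hx
      rw [(hBderiv x).deriv]
      have hx' : x ∈ Icc (0:ℝ) 1 := by
        rw [interior_Icc] at hx; exact ⟨hx.1.le, hx.2.le⟩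
      exact hAnn x hx'
  have hB1 : 0 ≤ B 1 := by
    have := hBmono (left_mem_Icc.mpr zero_le_one) (right_mem_Icc.mpr zero_le_one) zero_le_one
    rwa [hB0] at this
  -- unfold B 1 and identify the pieces
  have hg1 : g 1 = F (w + v) := by simp [hgdef]
  have hg0 : g 0 = F w := by simp [hgdef]
  have hdg0 : deriv g 0 = fderiv ℝ F w v := by
    have hL : HasDerivAt (fun s : ℝ => w + s • v) v 0 := by
      simpa using ((hasDerivAt_id (0:ℝ)).smul_const v).const_add w
    have hFd : HasFDerivAt F (fderiv ℝ F w) (w + (0:ℝ) • v) := by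
      simpa using (hF.differentiable (by norm_num) w).hasFDerivAt
    have : HasDerivAt g (fderiv ℝ F w v) 0 := by
      have := hFd.comp_hasDerivAt (0:ℝ) hL
      exact this
    exact this.deriv
  have hc2 : c ^ 2 = R ^ 2 * ‖v‖ ^ 2 := by rw [hcdef]; ring
  have key : g 1 ≤ g 0 + deriv g 0 + h0 / c ^ 2 * (Real.exp c - c - 1) := by
    have hb : B 1 = g 0 + deriv g 0 * 1 + h0 / c ^ 2 * (Real.exp (c * 1) - c * 1 - 1) - g 1 := rfl
    rw [hb] at hB1
    simp only [mul_one] at hB1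
    linarith
  rw [hg1, hg0, hdg0] at key
  rw [← hc2, hh2 0]
  exact key
end
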